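/- arXiv:2502.01435 — 2 statements merged into one kernel-verified Lean document; each statement's English description precedes it below -/
import Mathlib

section
/- Let G be a graph, U ⊆ V nonempty with an STC-satisfying labeling L, and λ = 0. Let w ∈ U be a vertex maximizing the strong degree deg_s(w,U,L). Then the clique C = {w} ∪ {strong neighbors of w in U} with the all-strong labeling L' satisfies q(C,L';0) = deg_s(w,U,L)/2 ≥ q(U,L;0). -/
open Finset

variable {V : Type*} [Fintype V] [DecidableEq V]

/-- Edges of the subgraph of `G` induced on the vertex set `U`. -/
def inducedEdges (G : SimpleGraph V) [DecidableRel G.Adj] (U : Finset V) : Finset (Sym2 V) :=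
  G.edgeFinset.filter (· ∈ U.sym2)

/-- The strong triadic closure property on `U` for the set `S` of strong edges:
two strong edges sharing an endpoint force adjacency of the other endpoints. -/
def STC (G : SimpleGraph V) (U : Finset V) (S : Finset (Sym2 V)) : Prop :=
  ∀ x y z : V, x ∈ U → y ∈ U → z ∈ U → x ≠ z →
    s(x, y) ∈ S → s(y, z) ∈ S → G.Adj x z

/-- The score q(U,L;λ) = (m_s + λ m_w)/|U|, where `S` is the set of strong edges
and the weak edges are the remaining induced edges. -/
noncomputable def score (G : SimpleGraph V) [DecidableRel G.Adj] (U : Finset V)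
    (S : Finset (Sym2 V)) (lam : ℝ) : ℝ :=
  ((S.card : ℝ) + lam * (((inducedEdges G U) \ S).card : ℝ)) / (U.card : ℝ)

/-- The strong degree of `v`: the number of strong edges incident to `v`. -/
def sdeg (S : Finset (Sym2 V)) (v : V) : ℕ := (S.filter (fun e => v ∈ e)).card

lemma mem_inducedEdges' {G : SimpleGraph V} [DecidableRel G.Adj] {U : Finset V} {a b : V} :
    s(a,b) ∈ inducedEdges G U ↔ G.Adj a b ∧ a ∈ U ∧ b ∈ U := by
  simp [inducedEdges, Finset.mk_mem_sym2_iff, SimpleGraph.mem_edgeFinset]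

lemma handshake (G : SimpleGraph V) [DecidableRel G.Adj] (U : Finset V) (S : Finset (Sym2 V))
    (hS : S ⊆ inducedEdges G U) : ∑ v ∈ U, sdeg S v = 2 * S.card := by
  unfold sdeg
  simp_rw [Finset.card_filter]
  rw [Finset.sum_comm]
  rw [Finset.sum_congr rfl (fun e he => ?_)]
  · rw [Finset.sum_const, smul_eq_mul, mul_comm]
  · obtain ⟨a, b⟩ := e
    obtain ⟨hab, ha, hb⟩ := mem_inducedEdges'.1 (hS he)
    rw [← Finset.card_filter]
    have : U.filter (fun v => v ∈ s(a,b)) = {a, b} := by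
      ext v
      simp only [Finset.mem_filter, Sym2.mem_iff, Finset.mem_insert, Finset.mem_singleton]
      constructor
      · rintro ⟨_, h⟩; exact h
      · rintro (rfl | rfl) <;> simp [ha, hb]
    rw [this, Finset.card_pair hab.ne]

lemma clique_edges (G : SimpleGraph V) [DecidableRel G.Adj] (C : Finset V)
    (hcl : ∀ x ∈ C, ∀ y ∈ C, x ≠ y → G.Adj x y) :
    inducedEdges G C = C.sym2 \ C.image Sym2.diag := by
  ext e
  obtain ⟨a, b⟩ := e
  simp only [mem_inducedEdges', Finset.mem_sdiff, Finset.mk_mem_sym2_iff, Finset.mem_image]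
  constructor
  · rintro ⟨hab, ha, hb⟩
    refine ⟨⟨ha, hb⟩, ?_⟩
    rintro ⟨c, _, hc⟩
    have hd : Sym2.IsDiag (Sym2.diag c) := Sym2.diag_isDiag c
    rw [hc] at hd
    exact hab.ne hd
  · rintro ⟨⟨ha, hb⟩, hnd⟩
    have hne : a ≠ b := by
      rintro rfl
      exact hnd ⟨a, ha, rfl⟩
    exact ⟨hcl a ha b hb hne, ha, hb⟩

lemma clique_edges_card (G : SimpleGraph V) [DecidableRel G.Adj] (C : Finset V)
    (hcl : ∀ x ∈ C, ∀ y ∈ C, x ≠ y → G.Adj x y) :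
    2 * (inducedEdges G C).card = C.card * (C.card - 1) := by
  rw [clique_edges G C hcl]
  have hsub : C.image Sym2.diag ⊆ C.sym2 := by
    intro e he
    obtain ⟨a, ha, rfl⟩ := Finset.mem_image.1 he
    exact Finset.mk_mem_sym2_iff.2 ⟨ha, ha⟩
  rw [Finset.card_sdiff_of_subset hsub, Finset.card_image_of_injective _ Sym2.diag_injective,
    Finset.card_sym2]
  have h2 : Nat.choose (C.card + 1) 2 = (C.card + 1) * C.card / 2 := by
    rw [Nat.choose_two_right]; simp
  rw [h2]
  have he : 2 * ((C.card + 1) * C.card / 2) = (C.card + 1) * C.card := by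
    exact Nat.two_mul_div_two_of_even (by simpa [mul_comm] using Nat.even_mul_succ_self C.card)
  have hge : C.card * 2 ≤ (C.card + 1) * C.card := by nlinarith [Nat.zero_le C.card]
  generalize hp : (C.card + 1) * C.card = p at *
  have hb : p = C.card * (C.card - 1) + 2 * C.card := by
    cases Nat.eq_zero_or_pos C.card with
    | inl h => simp [h] at hp ⊢; omega
    | inr h => rw [← hp]; cases C.card with | zero => omega | succ n => simp; ring
  omega

theorem stmt2 (G : SimpleGraph V) [DecidableRel G.Adj] (U : Finset V) (hU : U.Nonempty)
    (S : Finset (Sym2 V)) (hS : S ⊆ inducedEdges G U) (hstc : STC G U S)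
    (w : V) (hw : w ∈ U) (hmax : ∀ v ∈ U, sdeg S v ≤ sdeg S w) :
    score G (insert w (U.filter (fun v => s(v, w) ∈ S)))
        (inducedEdges G (insert w (U.filter (fun v => s(v, w) ∈ S)))) 0
      = (sdeg S w : ℝ) / 2 ∧
    (sdeg S w : ℝ) / 2 ≥ score G U S 0 := by
  set k := sdeg S w with hk
  set N := U.filter (fun v => s(v, w) ∈ S) with hN
  set C := insert w N with hC
  -- members of N are adjacent to w
  have hNadj : ∀ v ∈ N, G.Adj v w := fun v hv => by
    obtain ⟨_, hvS⟩ := Finset.mem_filter.1 hv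
    exact (mem_inducedEdges'.1 (hS hvS)).1
  have hwN : w ∉ N := fun h => G.irrefl (hNadj w h)
  -- |N| = k
  have hNcard : N.card = k := by
    rw [hk]
    unfold sdeg
    apply Finset.card_bij (fun v _ => s(v, w))
    · intro v hv
      exact Finset.mem_filter.2 ⟨(Finset.mem_filter.1 hv).2, Sym2.mem_mk_right v w⟩
    · intro a ha b hb hab
      rcases Sym2.eq_iff.1 hab with ⟨h1, _⟩ | ⟨h1, h2⟩
      · exact h1
      · exact absurd (h1 ▸ ha) hwN
    · intro e he
      obtain ⟨heS, hwe⟩ := Finset.mem_filter.1 he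
      obtain ⟨a, b⟩ := e
      obtain ⟨hab, ha, hb⟩ := mem_inducedEdges'.1 (hS heS)
      rcases Sym2.mem_iff.1 hwe with rfl | rfl
      · exact ⟨b, Finset.mem_filter.2 ⟨hb, by rwa [Sym2.eq_swap]⟩, by rw [Sym2.eq_swap]⟩
      · exact ⟨a, Finset.mem_filter.2 ⟨ha, heS⟩, rfl⟩
  have hCcard : C.card = k + 1 := by rw [hC, Finset.card_insert_of_notMem hwN, hNcard]
  -- C is a clique
  have hcl : ∀ x ∈ C, ∀ y ∈ C, x ≠ y → G.Adj x y := by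
    intro x hx y hy hxy
    rcases Finset.mem_insert.1 hx with rfl | hx <;> rcases Finset.mem_insert.1 hy with rfl | hy
    · exact absurd rfl hxy
    · exact (hNadj y hy).symm
    · exact hNadj x hx
    · obtain ⟨hxU, hxS⟩ := Finset.mem_filter.1 hx
      obtain ⟨hyU, hyS⟩ := Finset.mem_filter.1 hy
      exact hstc x w y hxU hw hyU hxy hxS (by rwa [Sym2.eq_swap])
  have hedge : 2 * (inducedEdges G C).card = (k + 1) * k := by
    rw [clique_edges_card G C hcl, hCcard]; simp
  -- part 1
  have hpos : (0:ℝ) < (k:ℝ) + 1 := by positivity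
  constructor
  · show ((((inducedEdges G C).card : ℝ)) + 0 * _) / (C.card : ℝ) = (k:ℝ)/2
    rw [zero_mul, add_zero, hCcard]
    have : ((inducedEdges G C).card : ℝ) * 2 = ((k:ℝ) + 1) * k := by
      have := congrArg (Nat.cast (R := ℝ)) hedge
      push_cast at this
      linarith
    push_cast
    field_simp
    linarith
  · -- part 2
    have hhs := handshake G U S hS
    have hsum : ∑ v ∈ U, sdeg S v ≤ U.card * k := by
      calc ∑ v ∈ U, sdeg S v ≤ ∑ _v ∈ U, k := Finset.sum_le_sum hmax
        _ = U.card * k := by rw [Finset.sum_const, smul_eq_mul]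
    have h2S : 2 * S.card ≤ U.card * k := hhs ▸ hsum
    have hUpos : (0:ℝ) < (U.card : ℝ) := by
      exact_mod_cast Finset.card_pos.2 hU
    show (k:ℝ)/2 ≥ ((S.card:ℝ) + 0 * _) / (U.card : ℝ)
    rw [zero_mul, add_zero, ge_iff_le, div_le_div_iff₀ hUpos (by norm_num)]
    have := (Nat.cast_le (α := ℝ)).2 h2S
    push_cast at this
    linarith
end

section
/- For λ = 0, the optimal value of the problem of maximizing q(U,L;0) over vertex subsets U and STC-satisfying labelings L equals (ω(G)-1)/2, where ω(G) is the maximum clique size of G. -/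
open Finset

variable {V : Type*} [Fintype V] [DecidableEq V]

/-- The graph whose edges are exactly the elements of `S`. -/
def strongGraph (S : Finset (Sym2 V)) : SimpleGraph V where
  Adj x y := x ≠ y ∧ s(x, y) ∈ S
  symm := by
    refine ⟨fun x y h => ?_⟩
    exact ⟨h.1.symm, by rw [Sym2.eq_swap]; exact h.2⟩
  loopless := ⟨fun x h => h.1 rfl⟩

instance (S : Finset (Sym2 V)) : DecidableRel (strongGraph S).Adj :=
  fun _ _ => instDecidableAnd

lemma strongGraph_edgeFinset (G : SimpleGraph V) [DecidableRel G.Adj] {U : Finset V}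
    {S : Finset (Sym2 V)} (hS : S ⊆ inducedEdges G U) :
    (strongGraph S).edgeFinset = S := by
  ext e
  induction e with
  | _ x y =>
    simp only [SimpleGraph.mem_edgeFinset, SimpleGraph.mem_edgeSet]
    constructor
    · exact fun h => h.2
    · intro h
      refine ⟨?_, h⟩
      have := hS h
      simp only [inducedEdges, mem_filter, SimpleGraph.mem_edgeFinset,
        SimpleGraph.mem_edgeSet] at this
      exact this.1.ne

lemma strongGraph_sum_degree (G : SimpleGraph V) [DecidableRel G.Adj] {U : Finset V}
    {S : Finset (Sym2 V)} (hS : S ⊆ inducedEdges G U) :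
    ∑ v, (strongGraph S).degree v = 2 * S.card := by
  have h := (strongGraph S).sum_degrees_eq_twice_card_edges
  rwa [strongGraph_edgeFinset G hS] at h

lemma mem_U_of_mem_S (G : SimpleGraph V) [DecidableRel G.Adj] {U : Finset V}
    {S : Finset (Sym2 V)} (hS : S ⊆ inducedEdges G U) {x y : V}
    (h : s(x, y) ∈ S) : x ∈ U ∧ y ∈ U := by
  have := hS h
  simp only [inducedEdges, mem_filter, Finset.mk_mem_sym2_iff] at this
  exact this.2

theorem stmt3 (G : SimpleGraph V) [DecidableRel G.Adj] [Nonempty V] :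
    IsGreatest {q : ℝ | ∃ (U : Finset V) (S : Finset (Sym2 V)),
        U.Nonempty ∧ S ⊆ inducedEdges G U ∧ STC G U S ∧ q = score G U S 0}
      (((G.cliqueNum : ℝ) - 1) / 2) := by
  have hω1 : 1 ≤ G.cliqueNum := by
    obtain ⟨v⟩ := ‹Nonempty V›
    have : ({v} : Finset V).card ≤ G.cliqueNum :=
      SimpleGraph.IsClique.card_le_cliqueNum (tc := by simp)
    simpa using this
  constructor
  · -- membership: take a maximum clique
    obtain ⟨K, hK⟩ := G.exists_isNClique_cliqueNum
    have hKcard : K.card = G.cliqueNum := hK.card_eq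
    have hKne : K.Nonempty := by
      rw [← Finset.card_pos, hKcard]; omega
    refine ⟨K, inducedEdges G K, hKne, le_refl _, ?_, ?_⟩
    · intro x y z hx hy hz hxz _ _
      exact hK.isClique hx hz hxz
    · -- score = (ω-1)/2
      set S := inducedEdges G K with hSdef
      have hSsub : S ⊆ inducedEdges G K := le_refl _
      have hdeg : ∀ v ∈ K, (strongGraph S).degree v = K.card - 1 := by
        intro v hv
        have : (strongGraph S).neighborFinset v = K.erase v := by
          ext w
          rw [SimpleGraph.mem_neighborFinset]
          simp only [SimpleGraph.mem_neighborFinset, strongGraph, mem_erase]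
          constructor
          · intro h
            exact ⟨h.1.symm, (mem_U_of_mem_S G hSsub h.2).2⟩
          · intro ⟨hne, hw⟩
            refine ⟨hne.symm, ?_⟩
            simp only [hSdef, inducedEdges, mem_filter, SimpleGraph.mem_edgeFinset,
              SimpleGraph.mem_edgeSet, Finset.mk_mem_sym2_iff]
            exact ⟨hK.isClique hv hw hne.symm, hv, hw⟩
        rw [SimpleGraph.degree, this, Finset.card_erase_of_mem hv]
      have hdeg0 : ∀ v ∉ K, (strongGraph S).degree v = 0 := by
        intro v hv
        rw [SimpleGraph.degree, Finset.card_eq_zero]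
        ext w
        rw [SimpleGraph.mem_neighborFinset]
        simp only [SimpleGraph.mem_neighborFinset, strongGraph, Finset.notMem_empty,
          iff_false]
        intro h
        exact hv (mem_U_of_mem_S G hSsub h.2).1
      have hsum : ∑ v, (strongGraph S).degree v = K.card * (K.card - 1) := by
        rw [← Finset.sum_subset (Finset.subset_univ K)
          (fun v _ hv => hdeg0 v hv)]
        rw [Finset.sum_congr rfl hdeg, Finset.sum_const, smul_eq_mul]
      have h2S : 2 * S.card = K.card * (K.card - 1) := by
        rw [← strongGraph_sum_degree G hSsub, hsum]
      have hKpos : 0 < K.card := Finset.card_pos.mpr hKne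
      have hcast : (2 : ℝ) * S.card = K.card * ((K.card : ℝ) - 1) := by
        have := congrArg (Nat.cast : ℕ → ℝ) h2S
        push_cast [Nat.cast_sub (by omega : 1 ≤ K.card)] at this
        convert this using 2
      rw [score]
      field_simp
      rw [← hKcard]
      nlinarith [hcast]
  · -- upper bound
    rintro q ⟨U, S, hUne, hS, hSTC, rfl⟩
    have hUpos : 0 < U.card := Finset.card_pos.mpr hUne
    -- degree bound
    have hdegle : ∀ v, (strongGraph S).degree v ≤ G.cliqueNum - 1 := by
      intro v
      by_cases hv : v ∈ U
      · have hclique : G.IsClique (insert v ((strongGraph S).neighborFinset v) : Finset V) := by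
          intro a ha b hb hab
          simp only [Finset.coe_insert, Set.mem_insert_iff, Finset.mem_coe,
            SimpleGraph.mem_neighborFinset] at ha hb
          rcases ha with rfl | ha <;> rcases hb with rfl | hb
          · exact absurd rfl hab
          · -- a = v, b neighbor
            have hbS : s(a, b) ∈ S := hb.2
            have := hS hbS
            simp only [inducedEdges, mem_filter, SimpleGraph.mem_edgeFinset,
              SimpleGraph.mem_edgeSet] at this
            exact this.1
          · have haS : s(b, a) ∈ S := ha.2
            have := hS haS
            simp only [inducedEdges, mem_filter, SimpleGraph.mem_edgeFinset,
              SimpleGraph.mem_edgeSet] at this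
            exact this.1.symm
          · -- both neighbors of v
            have haS : s(a, v) ∈ S := by rw [Sym2.eq_swap]; exact ha.2
            have hbS : s(v, b) ∈ S := hb.2
            have haU : a ∈ U := (mem_U_of_mem_S G hS haS).1
            have hbU : b ∈ U := (mem_U_of_mem_S G hS hbS).2
            exact hSTC a v b haU hv hbU hab haS hbS
        have hcard : (insert v ((strongGraph S).neighborFinset v)).card ≤ G.cliqueNum :=
          SimpleGraph.IsClique.card_le_cliqueNum (tc := hclique)
        have hvnot : v ∉ (strongGraph S).neighborFinset v := by
          simp [SimpleGraph.mem_neighborFinset]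
        rw [Finset.card_insert_of_notMem hvnot] at hcard
        have : (strongGraph S).degree v = ((strongGraph S).neighborFinset v).card := rfl
        omega
      · have : (strongGraph S).degree v = 0 := by
          rw [SimpleGraph.degree, Finset.card_eq_zero]
          ext w
          rw [SimpleGraph.mem_neighborFinset]
          simp only [SimpleGraph.mem_neighborFinset, strongGraph, Finset.notMem_empty,
            iff_false]
          intro h
          exact hv (mem_U_of_mem_S G hS h.2).1
        omega
    have hdeg0 : ∀ v ∉ U, (strongGraph S).degree v = 0 := by
      intro v hv
      rw [SimpleGraph.degree, Finset.card_eq_zero]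
      ext w
      rw [SimpleGraph.mem_neighborFinset]
      simp only [SimpleGraph.mem_neighborFinset, strongGraph, Finset.notMem_empty,
        iff_false]
      intro h
      exact hv (mem_U_of_mem_S G hS h.2).1
    have hsumle : 2 * S.card ≤ U.card * (G.cliqueNum - 1) := by
      rw [← strongGraph_sum_degree G hS,
        ← Finset.sum_subset (Finset.subset_univ U) (fun v _ hv => hdeg0 v hv)]
      calc ∑ v ∈ U, (strongGraph S).degree v ≤ ∑ _v ∈ U, (G.cliqueNum - 1) :=
            Finset.sum_le_sum (fun v _ => hdegle v)
        _ = U.card * (G.cliqueNum - 1) := by rw [Finset.sum_const, smul_eq_mul]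
    have hcast : (2 : ℝ) * S.card ≤ U.card * ((G.cliqueNum : ℝ) - 1) := by
      have := (Nat.cast_le (α := ℝ)).mpr hsumle
      push_cast [Nat.cast_sub hω1] at this
      linarith
    rw [score]
    rw [div_le_div_iff₀ (by positivity) (by norm_num : (0:ℝ) < 2)]
    nlinarith [hcast]
end
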